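/- arXiv:2008.03326 — 6 statements merged into one kernel-verified Lean document; each statement's English description precedes it below -/
import Mathlib

section
/- Let ρ_L, ρ_s, q be real numbers with |q| < 1, and define F : ℝ → ℝ by F(θ) = (θ ρ_L + ρ_s) / √(1 + θ² + 2θq). Set R = √((ρ_s² + ρ_L² − 2q ρ_L ρ_s)/(1 − q²)). Then: (i) for every θ ∈ ℝ, |F(θ)| ≤ R; (ii) ρ_L² ≤ R² and ρ_s² ≤ R² (so the bound also dominates the limiting values of |F| at θ → ±∞ and at θ = 0); and (iii) if ρ_s ≠ ρ_L q, then for θ* = (ρ_L − ρ_s q)/(ρ_s − ρ_L q) one has F(θ*)² = R², i.e. the bound R is attained in absolute value at θ*. -/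
/-- Properties of the correlation `F(θ)` of the linear combination
`θ·x̄^L + x̂^s`: it is bounded in absolute value by
`R = √((ρ_s² + ρ_L² − 2q ρ_L ρ_s)/(1 − q²))`, the bound dominates the limiting
values `ρ_L²` and `ρ_s²`, and (when `ρ_s ≠ ρ_L q`) it is attained at
`θ* = (ρ_L − ρ_s q)/(ρ_s − ρ_L q)`. -/
theorem combined_correlation_bound (ρL ρs q : ℝ) (hq : |q| < 1)
    (F : ℝ → ℝ)
    (hF : ∀ θ : ℝ, F θ = (θ * ρL + ρs) / Real.sqrt (1 + θ ^ 2 + 2 * θ * q))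
    (R : ℝ)
    (hR : R = Real.sqrt ((ρs ^ 2 + ρL ^ 2 - 2 * q * ρL * ρs) / (1 - q ^ 2))) :
    (∀ θ : ℝ, |F θ| ≤ R) ∧
    ρL ^ 2 ≤ R ^ 2 ∧ ρs ^ 2 ≤ R ^ 2 ∧
    (ρs ≠ ρL * q → (F ((ρL - ρs * q) / (ρs - ρL * q))) ^ 2 = R ^ 2) := by
  have hq2 : 0 < 1 - q ^ 2 := by
    have := abs_lt.mp hq
    nlinarith
  set num : ℝ := ρs ^ 2 + ρL ^ 2 - 2 * q * ρL * ρs with hnum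
  have hnumnn : 0 ≤ num := by nlinarith [sq_nonneg (ρs - q * ρL), sq_nonneg ρL]
  have hNnn : 0 ≤ num / (1 - q ^ 2) := div_nonneg hnumnn hq2.le
  have hRnn : 0 ≤ R := hR ▸ Real.sqrt_nonneg _
  have hR2 : R ^ 2 = num / (1 - q ^ 2) := by
    rw [hR, Real.sq_sqrt hNnn]
  have hD : ∀ θ : ℝ, 0 < 1 + θ ^ 2 + 2 * θ * q := by
    intro θ; nlinarith [sq_nonneg (θ + q)]
  have hF2 : ∀ θ : ℝ, (F θ) ^ 2 = (θ * ρL + ρs) ^ 2 / (1 + θ ^ 2 + 2 * θ * q) := by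
    intro θ
    rw [hF, div_pow, Real.sq_sqrt (hD θ).le]
  refine ⟨?_, ?_, ?_, ?_⟩
  · intro θ
    have hid : num * (1 + θ ^ 2 + 2 * θ * q) - (θ * ρL + ρs) ^ 2 * (1 - q ^ 2)
        = (θ * (ρs - ρL * q) - (ρL - ρs * q)) ^ 2 := by rw [hnum]; ring
    have key : (θ * ρL + ρs) ^ 2 * (1 - q ^ 2) ≤ num * (1 + θ ^ 2 + 2 * θ * q) := by
      nlinarith [sq_nonneg (θ * (ρs - ρL * q) - (ρL - ρs * q)), hid]
    have hsq : (F θ) ^ 2 ≤ R ^ 2 := by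
      rw [hF2 θ, hR2, div_le_div_iff₀ (hD θ) hq2]
      linarith
    calc |F θ| = Real.sqrt ((F θ) ^ 2) := (Real.sqrt_sq_eq_abs _).symm
      _ ≤ Real.sqrt (R ^ 2) := Real.sqrt_le_sqrt hsq
      _ = R := Real.sqrt_sq hRnn
  · rw [hR2, le_div_iff₀ hq2]
    nlinarith [sq_nonneg (ρs - q * ρL)]
  · rw [hR2, le_div_iff₀ hq2]
    nlinarith [sq_nonneg (ρL - q * ρs)]
  · intro h
    have hd : ρs - ρL * q ≠ 0 := sub_ne_zero.mpr h
    set θ : ℝ := (ρL - ρs * q) / (ρs - ρL * q)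
    rw [hF2 θ, hR2, div_eq_div_iff (hD θ).ne' hq2.ne']
    simp only [θ, hnum]
    field_simp
    ring
end

section
/- Let ρ_L ∈ ℝ and ρ_s ≥ 0 with (ρ_L, ρ_s) ≠ (0,0), and let q ∈ ℝ with |q| < 1. Define ρ_max = max(|ρ_L|, ρ_s) and p = ρ_s/ρ_L if |ρ_L| ≥ ρ_s, and p = ρ_L/ρ_s otherwise. Then the identity √((ρ_s² + ρ_L² − 2q ρ_L ρ_s)/(1 − q²)) = ρ_max · √(1 + (p − q)²/(1 − q²)) holds; consequently, if in addition q ≠ p, then √((ρ_s² + ρ_L² − 2q ρ_L ρ_s)/(1 − q²)) > ρ_max, i.e. the optimal linear combination of the two estimators strictly improves on the better of the two individual asymptotic correlations. -/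
/-- The asymptotic correlation of the optimal linear combination equals
`ρ_max · √(1 + (p − q)²/(1 − q²))`, and hence strictly exceeds
`ρ_max = max(|ρ_L|, ρ_s)` whenever `|q| < 1` and `q ≠ p`. -/
theorem optimal_linear_combination_gain (ρL ρs q : ℝ)
    (hρs : 0 ≤ ρs) (hρ : ¬(ρL = 0 ∧ ρs = 0)) (hq : |q| < 1)
    (ρmax p : ℝ)
    (hmax : ρmax = max |ρL| ρs)
    (hp : p = if ρs ≤ |ρL| then ρs / ρL else ρL / ρs) :
    Real.sqrt ((ρs ^ 2 + ρL ^ 2 - 2 * q * ρL * ρs) / (1 - q ^ 2))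
        = ρmax * Real.sqrt (1 + (p - q) ^ 2 / (1 - q ^ 2)) ∧
    (q ≠ p →
      ρmax < Real.sqrt ((ρs ^ 2 + ρL ^ 2 - 2 * q * ρL * ρs) / (1 - q ^ 2))) := by
  have hq' := abs_lt.mp hq
  have h1 : (0:ℝ) < 1 - q ^ 2 := by nlinarith [hq'.1, hq'.2]
  have main : ∀ (hmaxpos : 0 < ρmax),
      (ρs ^ 2 + ρL ^ 2 - 2 * q * ρL * ρs) / (1 - q ^ 2)
        = ρmax ^ 2 * (1 + (p - q) ^ 2 / (1 - q ^ 2)) →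
      Real.sqrt ((ρs ^ 2 + ρL ^ 2 - 2 * q * ρL * ρs) / (1 - q ^ 2))
          = ρmax * Real.sqrt (1 + (p - q) ^ 2 / (1 - q ^ 2)) ∧
      (q ≠ p →
        ρmax < Real.sqrt ((ρs ^ 2 + ρL ^ 2 - 2 * q * ρL * ρs) / (1 - q ^ 2))) := by
    intro hmaxpos key
    have heq : Real.sqrt ((ρs ^ 2 + ρL ^ 2 - 2 * q * ρL * ρs) / (1 - q ^ 2))
        = ρmax * Real.sqrt (1 + (p - q) ^ 2 / (1 - q ^ 2)) := by
      rw [key, Real.sqrt_mul (sq_nonneg _), Real.sqrt_sq hmaxpos.le]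
    refine ⟨heq, fun hqp => ?_⟩
    have hpq : p - q ≠ 0 := sub_ne_zero.mpr (fun h => hqp h.symm)
    have hposX : 0 < (p - q) ^ 2 / (1 - q ^ 2) :=
      div_pos (by positivity) h1
    have hsq : 1 < Real.sqrt (1 + (p - q) ^ 2 / (1 - q ^ 2)) := by
      rw [show (1:ℝ) = Real.sqrt 1 from Real.sqrt_one.symm]
      exact Real.sqrt_lt_sqrt (by norm_num) (by rw [Real.sqrt_one]; linarith)
    rw [heq]
    exact (lt_mul_iff_one_lt_right hmaxpos).mpr hsq
  by_cases hc : ρs ≤ |ρL|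
  · have hL : ρL ≠ 0 := by
      intro h
      apply hρ
      refine ⟨h, le_antisymm ?_ hρs⟩
      simpa [h] using hc
    have hmax' : ρmax = |ρL| := by rw [hmax, max_eq_left hc]
    have hp' : p = ρs / ρL := by rw [hp, if_pos hc]
    refine main (by rw [hmax']; exact abs_pos.mpr hL) ?_
    rw [hmax', hp', sq_abs]
    field_simp
    ring
  · push_neg at hc
    have hs : 0 < ρs := lt_of_le_of_lt (abs_nonneg _) hc
    have hmax' : ρmax = ρs := by rw [hmax, max_eq_right hc.le]
    have hp' : p = ρL / ρs := by rw [hp, if_neg (not_le.mpr hc)]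
    refine main (by rw [hmax']; exact hs) ?_
    rw [hmax', hp']
    field_simp
    ring
end

section
/- Let (Ω, 𝓕, P) be a probability space, let G : Ω → ℝ be a random variable whose law is the standard Gaussian N(0,1), and let Z : Ω → ℝ be a measurable random variable that is almost surely bounded (|Z| ≤ M a.s. for some M). Write c₁ = E[Z G²] − E[Z], c₂ = E[Z² G²], c₃ = E[Z²]. Assume E[Z(G² − 1)] > 0 (i.e. c₁ > 0) and δ > c₃/c₁² for a real δ > 0; set β̃² = δ c₁², μ̃ = √( β̃²(β̃² − c₃) / (β̃² + c₂ − c₃) ) and σ̃² = β̃² c₂ / (β̃² + c₂ − c₃). Define the state-evolution map T on pairs (μ, σ²) ∈ ℝ × [0,∞) with μ² + σ² > 0 by T(μ, σ²) = ( √δ · (μ/β) · c₁ , (μ² c₂ + σ² c₃)/β² ) where β = √(μ² + σ²). Then the fixed points of T in {(μ, σ²) ∈ ℝ × [0,∞) : μ² + σ² > 0} are exactly the three points (0, c₃), (μ̃, σ̃²), and (−μ̃, σ̃²). -/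
open MeasureTheory ProbabilityTheory

/-- The fixed points of the state-evolution map `T` of the GAMP algorithm with
linear denoisers are exactly `(0, c₃)`, `(μ̃, σ̃²)` and `(−μ̃, σ̃²)`. -/
theorem state_evolution_fixed_points
    {Ω : Type*} {mΩ : MeasurableSpace Ω} (P : Measure Ω) [IsProbabilityMeasure P]
    (G Z : Ω → ℝ) (hG : Measurable G) (hZ : Measurable Z)
    (hGlaw : Measure.map G P = gaussianReal 0 1)
    (hZbdd : ∃ M : ℝ, ∀ᵐ ω ∂P, |Z ω| ≤ M)
    (c₁ c₂ c₃ : ℝ)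
    (hc₁ : c₁ = (∫ ω, Z ω * (G ω) ^ 2 ∂P) - ∫ ω, Z ω ∂P)
    (hc₂ : c₂ = ∫ ω, (Z ω) ^ 2 * (G ω) ^ 2 ∂P)
    (hc₃ : c₃ = ∫ ω, (Z ω) ^ 2 ∂P)
    (hc₁pos : 0 < c₁)
    (δ : ℝ) (hδpos : 0 < δ) (hδ : c₃ / c₁ ^ 2 < δ)
    (β2 μt σt2 : ℝ)
    (hβ2 : β2 = δ * c₁ ^ 2)
    (hμt : μt = Real.sqrt (β2 * (β2 - c₃) / (β2 + c₂ - c₃)))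
    (hσt2 : σt2 = β2 * c₂ / (β2 + c₂ - c₃))
    (T : ℝ × ℝ → ℝ × ℝ)
    (hT : T = fun p =>
      (Real.sqrt δ * (p.1 / Real.sqrt (p.1 ^ 2 + p.2)) * c₁,
       (p.1 ^ 2 * c₂ + p.2 * c₃) / (p.1 ^ 2 + p.2))) :
    ∀ μ σ2 : ℝ, 0 ≤ σ2 → 0 < μ ^ 2 + σ2 →
      (T (μ, σ2) = (μ, σ2) ↔
        (μ, σ2) = (0, c₃) ∨ (μ, σ2) = (μt, σt2) ∨ (μ, σ2) = (-μt, σt2)) := by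
  intro μ σ2 hσ2 hpos
  subst hT
  have hc₁2 : (0:ℝ) < c₁ ^ 2 := by positivity
  have hβ2c₃ : c₃ < β2 := by
    rw [hβ2]
    calc c₃ = c₃ / c₁ ^ 2 * c₁ ^ 2 := by field_simp
    _ < δ * c₁ ^ 2 := mul_lt_mul_of_pos_right hδ hc₁2
  have hc₂nn : 0 ≤ c₂ := by
    rw [hc₂]; apply integral_nonneg; intro ω; positivity
  have hD : 0 < β2 + c₂ - c₃ := by linarith
  have hβ2pos : 0 < β2 := by rw [hβ2]; positivity
  have hμt2 : μt ^ 2 = β2 * (β2 - c₃) / (β2 + c₂ - c₃) := by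
    rw [hμt, Real.sq_sqrt]
    exact div_nonneg (by nlinarith) hD.le
  have hμtnn : 0 ≤ μt := hμt ▸ Real.sqrt_nonneg _
  have hsum : μt ^ 2 + σt2 = β2 := by
    rw [hμt2, hσt2]; field_simp; ring
  have hsqrtβ2 : Real.sqrt β2 = Real.sqrt δ * c₁ := by
    rw [hβ2, Real.sqrt_mul hδpos.le, Real.sqrt_sq hc₁pos.le]
  constructor
  · rintro hfix
    rw [Prod.ext_iff] at hfix
    obtain ⟨h1, h2⟩ := hfix
    simp only at h1 h2
    by_cases hμ : μ = 0
    · left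
      subst hμ
      have hσpos : 0 < σ2 := by simpa using hpos
      rw [show (0:ℝ)^2 * c₂ + σ2 * c₃ = c₃ * σ2 by ring,
        show (0:ℝ)^2 + σ2 = σ2 by ring,
        mul_div_assoc, div_self hσpos.ne', mul_one] at h2
      simp [Prod.ext_iff, h2]
    · have hsne : Real.sqrt (μ ^ 2 + σ2) ≠ 0 := (Real.sqrt_pos.mpr hpos).ne'
      field_simp at h1
      have hs : Real.sqrt (μ ^ 2 + σ2) = Real.sqrt δ * c₁ := by
        apply mul_left_cancel₀ hμ
        linear_combination (-μ) * h1
      have hβeq : μ ^ 2 + σ2 = β2 := by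
        have h := congrArg (· ^ 2) hs
        simp only [mul_pow] at h
        rw [Real.sq_sqrt hpos.le, Real.sq_sqrt hδpos.le] at h
        rw [h, hβ2]
      rw [hβeq, div_eq_iff hβ2pos.ne'] at h2
      have hμ2 : μ ^ 2 = μt ^ 2 := by
        rw [hμt2, eq_div_iff hD.ne']
        nlinarith [h2, hβeq]
      have hσeq : σ2 = σt2 := by nlinarith [hβeq, hsum]
      rcases sq_eq_sq_iff_eq_or_eq_neg.mp hμ2 with h | h
      · right; left; exact Prod.ext h hσeq
      · right; right; exact Prod.ext h hσeq
  · have hδs : (0:ℝ) < Real.sqrt δ := Real.sqrt_pos.mpr hδpos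
    have hkey2 : (μt ^ 2 * c₂ + σt2 * c₃) / (μt ^ 2 + σt2) = σt2 := by
      rw [hsum, div_eq_iff hβ2pos.ne', hμt2, hσt2]
      field_simp
      ring
    have hkey1 : Real.sqrt δ * (μt / Real.sqrt (μt ^ 2 + σt2)) * c₁ = μt := by
      rw [hsum, hsqrtβ2]
      have hne : Real.sqrt δ * c₁ ≠ 0 := by positivity
      calc Real.sqrt δ * (μt / (Real.sqrt δ * c₁)) * c₁
          = μt * (Real.sqrt δ * c₁ / (Real.sqrt δ * c₁)) := by ring
        _ = μt := by rw [div_self hne, mul_one]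
    rintro (h | h | h) <;> rw [Prod.ext_iff] at h <;> obtain ⟨h1, h2⟩ := h <;>
      simp only at h1 h2 <;> rw [h1, h2]
    · have hc₃pos : 0 < c₃ := by rw [h1, h2] at hpos; simpa using hpos
      simp only
      rw [Prod.mk.injEq]
      refine ⟨by simp, ?_⟩
      rw [show (0:ℝ)^2 * c₂ + c₃ * c₃ = c₃ * c₃ by ring,
        show (0:ℝ)^2 + c₃ = c₃ by ring,
        mul_div_assoc, div_self hc₃pos.ne', mul_one]
    · simp only
      rw [Prod.mk.injEq]
      exact ⟨hkey1, hkey2⟩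
    · simp only
      rw [Prod.mk.injEq]
      constructor
      · rw [show (-μt)^2 + σt2 = μt^2 + σt2 by ring, hsum, hsqrtβ2]
        rw [hsum, hsqrtβ2] at hkey1
        linear_combination -hkey1
      · rw [show (-μt)^2 * c₂ = μt^2 * c₂ by ring,
          show (-μt)^2 + σt2 = μt^2 + σt2 by ring]
        exact hkey2
end

section
/- Let (Ω, 𝓕, P) be a probability space, let G : Ω → ℝ have the standard Gaussian law N(0,1), and let Z : Ω → ℝ be measurable and almost surely bounded. Write c₁ = E[Z G²] − E[Z], c₂ = E[Z² G²], c₃ = E[Z²], and assume c₁ > 0 and δ > c₃/c₁² for some real δ > 0. Set β̃² = δ c₁², μ̃ = √( β̃²(β̃² − c₃) / (β̃² + c₂ − c₃) ), σ̃² = β̃² c₂ / (β̃² + c₂ − c₃). Define sequences (μ_t), (σ²_t) by the recursion μ_{t+1} = √δ · (μ_t/β_t) · c₁ and σ²_{t+1} = (μ_t² c₂ + σ²_t c₃)/β_t², where β_t = √(μ_t² + σ²_t), from an initialization with σ²_1 > 0. If μ_1 > 0 then μ_t → μ̃ and σ²_t → σ̃² as t → ∞; if μ_1 < 0 then μ_t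 → −μ̃ and σ²_t → σ̃². -/
open MeasureTheory ProbabilityTheory Filter

lemma se_aux (c₁ c₂ c₃ : ℝ) (hc₁pos : 0 < c₁) (hc₂pos : 0 < c₂) (hc₃pos : 0 < c₃)
    (δ : ℝ) (hδpos : 0 < δ) (hδ : c₃ / c₁ ^ 2 < δ)
    (β2 μt σt2 : ℝ)
    (hβ2 : β2 = δ * c₁ ^ 2)
    (hμt : μt = Real.sqrt (β2 * (β2 - c₃) / (β2 + c₂ - c₃)))
    (hσt2 : σt2 = β2 * c₂ / (β2 + c₂ - c₃))
    (μ σ2 : ℕ → ℝ)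
    (hσ2init : 0 < σ2 1)
    (hrec : ∀ t : ℕ, 1 ≤ t →
      μ (t + 1) = Real.sqrt δ * (μ t / Real.sqrt ((μ t) ^ 2 + σ2 t)) * c₁ ∧
      σ2 (t + 1) = ((μ t) ^ 2 * c₂ + σ2 t * c₃) / ((μ t) ^ 2 + σ2 t))
    (hμ1 : 0 < μ 1) :
    Tendsto μ atTop (nhds μt) ∧ Tendsto σ2 atTop (nhds σt2) := by
  have hβ2pos : 0 < β2 := by rw [hβ2]; positivity
  have hβ2ne : β2 ≠ 0 := hβ2pos.ne'
  have hβc : c₃ < β2 := by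
    rw [hβ2]; exact (div_lt_iff₀ (pow_pos hc₁pos 2)).mp hδ
  have hne1 : β2 - c₃ ≠ 0 := by linarith
  have hne2 : β2 + c₂ - c₃ ≠ 0 := by linarith
  -- positivity invariant
  have hpos : ∀ t, 1 ≤ t → 0 < μ t ∧ 0 < σ2 t := by
    intro t ht
    induction t, ht using Nat.le_induction with
    | base => exact ⟨hμ1, hσ2init⟩
    | succ t ht ih =>
      obtain ⟨hμp, hσp⟩ := ih
      have hxy : 0 < (μ t) ^ 2 + σ2 t := by positivity
      obtain ⟨h1, h2⟩ := hrec t ht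
      constructor
      · rw [h1]; positivity
      · rw [h2]; positivity
  obtain ⟨a, ha_def⟩ : ∃ a : ℝ, a = c₃ / β2 := ⟨_, rfl⟩
  obtain ⟨b, hb_def⟩ : ∃ b : ℝ, b = c₂ / β2 := ⟨_, rfl⟩
  obtain ⟨L, hL_def⟩ : ∃ L : ℝ, L = c₂ / (β2 - c₃) := ⟨_, rfl⟩
  have hapos : 0 < a := by rw [ha_def]; positivity
  have ha1 : a < 1 := by rw [ha_def]; exact (div_lt_one hβ2pos).mpr hβc
  have hLpos : 0 < L := by rw [hL_def]; exact div_pos hc₂pos (by linarith)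
  have h1L : 0 < 1 + L := by linarith
  obtain ⟨u, hu_def⟩ : ∃ u : ℕ → ℝ, u = fun t => σ2 t / (μ t) ^ 2 := ⟨_, rfl⟩
  have hu : ∀ t, u t = σ2 t / (μ t) ^ 2 := fun t => by rw [hu_def]
  -- square of μ (t+1)
  have hμsq : ∀ t, 1 ≤ t → (μ (t + 1)) ^ 2 = β2 * (μ t) ^ 2 / ((μ t) ^ 2 + σ2 t) := by
    intro t ht
    obtain ⟨hμp, hσp⟩ := hpos t ht
    have hxy : 0 < (μ t) ^ 2 + σ2 t := by positivity
    rw [(hrec t ht).1]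
    rw [mul_pow, mul_pow, div_pow, Real.sq_sqrt hδpos.le, Real.sq_sqrt hxy.le, hβ2]
    ring
  -- affine recursion for u
  have hstep : ∀ t, 1 ≤ t → u (t + 1) = a * u t + b := by
    intro t ht
    obtain ⟨hμp, hσp⟩ := hpos t ht
    have hxy : 0 < (μ t) ^ 2 + σ2 t := by positivity
    rw [hu (t + 1), hu t, (hrec t ht).2, hμsq t ht, ha_def, hb_def]
    field_simp
    ring
  -- closed form
  have hfixed : a * L + b = L := by
    rw [ha_def, hb_def, hL_def]
    field_simp
    ring
  have hclosed : ∀ n : ℕ, u (n + 1) - L = a ^ n * (u 1 - L) := by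
    intro n
    induction n with
    | zero => simp
    | succ n ih =>
      have hs := hstep (n + 1) (Nat.le_add_left 1 n)
      calc u (n + 1 + 1) - L = a * u (n + 1) + b - L := by rw [hs]
        _ = a * (u (n + 1) - L) := by linear_combination hfixed
        _ = a ^ (n + 1) * (u 1 - L) := by rw [ih]; ring
  have hulim : Tendsto u atTop (nhds L) := by
    rw [← tendsto_add_atTop_iff_nat 1]
    have heq : (fun n => u (n + 1)) = fun n => a ^ n * (u 1 - L) + L := by
      funext n; have := hclosed n; linarith
    rw [heq]
    have hpow : Tendsto (fun n : ℕ => a ^ n) atTop (nhds 0) :=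
      tendsto_pow_atTop_nhds_zero_of_lt_one hapos.le ha1
    have := (hpow.mul_const (u 1 - L)).add_const L
    simpa using this
  -- σ2 in terms of u
  have hσform : ∀ t, 1 ≤ t → σ2 (t + 1) = (c₂ + c₃ * u t) / (1 + u t) := by
    intro t ht
    obtain ⟨hμp, hσp⟩ := hpos t ht
    have hxy : 0 < (μ t) ^ 2 + σ2 t := by positivity
    rw [(hrec t ht).2, hu t]
    field_simp
  have hμform : ∀ t, 1 ≤ t → μ (t + 1) = Real.sqrt (β2 / (1 + u t)) := by
    intro t ht
    obtain ⟨hμp, hσp⟩ := hpos t ht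
    have hxy : 0 < (μ t) ^ 2 + σ2 t := by positivity
    have hμp' : 0 < μ (t + 1) := (hpos (t + 1) (Nat.le_add_left 1 t)).1
    have he : β2 / (1 + u t) = (μ (t + 1)) ^ 2 := by
      rw [hμsq t ht, hu t]
      field_simp
    rw [he, Real.sqrt_sq hμp'.le]
  -- limit of σ2
  have hσlim : Tendsto σ2 atTop (nhds σt2) := by
    have hlim2 : Tendsto (fun t => (c₂ + c₃ * u t) / (1 + u t)) atTop
        (nhds ((c₂ + c₃ * L) / (1 + L))) :=
      (((tendsto_const_nhds).add ((tendsto_const_nhds).mul hulim)).div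
        ((tendsto_const_nhds).add hulim) (by linarith))
    have hval : (c₂ + c₃ * L) / (1 + L) = σt2 := by
      rw [hσt2, div_eq_div_iff (by linarith) hne2, hL_def]
      field_simp
      ring
    rw [← tendsto_add_atTop_iff_nat 1]
    refine Tendsto.congr' ?_ (hval ▸ hlim2)
    filter_upwards [eventually_ge_atTop 1] with t ht
    exact (hσform t ht).symm
  refine ⟨?_, hσlim⟩
  have hμval : Real.sqrt (β2 / (1 + L)) = μt := by
    rw [hμt]
    congr 1
    rw [div_eq_div_iff (by linarith : (1:ℝ) + L ≠ 0) hne2, hL_def]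
    field_simp
    ring
  have hμlim2 : Tendsto (fun t => Real.sqrt (β2 / (1 + u t))) atTop
      (nhds (Real.sqrt (β2 / (1 + L)))) :=
    (Tendsto.div tendsto_const_nhds ((tendsto_const_nhds).add hulim)
      (by linarith)).sqrt
  rw [← tendsto_add_atTop_iff_nat 1]
  refine Tendsto.congr' ?_ (hμval ▸ hμlim2)
  filter_upwards [eventually_ge_atTop 1] with t ht
  exact (hμform t ht).symm


lemma se_G2_integrable {Ω : Type*} {mΩ : MeasurableSpace Ω} (P : Measure Ω)
    [IsProbabilityMeasure P] (G : Ω → ℝ) (hG : Measurable G)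
    (hGlaw : Measure.map G P = gaussianReal 0 1) :
    Integrable (fun ω => (G ω) ^ 2) P := by
  have h1 : Integrable (fun x : ℝ => x ^ 2) (gaussianReal 0 1) := by
    rw [gaussianReal_of_var_ne_zero 0 one_ne_zero]
    rw [integrable_withDensity_iff (measurable_gaussianPDF 0 1)
      (ae_of_all _ fun x => ENNReal.ofReal_lt_top)]
    have : (fun x : ℝ => x ^ 2 * (gaussianPDF 0 1 x).toReal)
        = fun x : ℝ => (Real.sqrt (2 * Real.pi))⁻¹ * (x ^ (2:ℝ) * Real.exp (-(2⁻¹ : ℝ) * x ^ 2)) := by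
      funext x
      rw [gaussianPDF, ENNReal.toReal_ofReal (gaussianPDFReal_nonneg 0 1 x), gaussianPDFReal]
      have h2 : (x : ℝ) ^ (2:ℝ) = x ^ 2 := by
        rw [show (2:ℝ) = ((2:ℕ):ℝ) by norm_num, Real.rpow_natCast]
      simp only [NNReal.coe_one, mul_one, sub_zero, h2]
      ring_nf
    rw [this]
    exact (integrable_rpow_mul_exp_neg_mul_sq (by norm_num) (by norm_num)).const_mul _
  rw [← hGlaw] at h1
  exact (integrable_map_measure (by fun_prop) hG.aemeasurable).mp h1

/-- Convergence of the state-evolution recursion of the GAMP algorithm with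
linear denoisers: from any initialization with `σ²₁ > 0`, the iterates converge
to the nontrivial fixed point `(μ̃, σ̃²)` if `μ₁ > 0`, and to `(−μ̃, σ̃²)` if
`μ₁ < 0`. -/
theorem state_evolution_convergence
    {Ω : Type*} {mΩ : MeasurableSpace Ω} (P : Measure Ω) [IsProbabilityMeasure P]
    (G Z : Ω → ℝ) (hG : Measurable G) (hZ : Measurable Z)
    (hGlaw : Measure.map G P = gaussianReal 0 1)
    (hZbdd : ∃ M : ℝ, ∀ᵐ ω ∂P, |Z ω| ≤ M)
    (c₁ c₂ c₃ : ℝ)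
    (hc₁ : c₁ = (∫ ω, Z ω * (G ω) ^ 2 ∂P) - ∫ ω, Z ω ∂P)
    (hc₂ : c₂ = ∫ ω, (Z ω) ^ 2 * (G ω) ^ 2 ∂P)
    (hc₃ : c₃ = ∫ ω, (Z ω) ^ 2 ∂P)
    (hc₁pos : 0 < c₁)
    (δ : ℝ) (hδpos : 0 < δ) (hδ : c₃ / c₁ ^ 2 < δ)
    (β2 μt σt2 : ℝ)
    (hβ2 : β2 = δ * c₁ ^ 2)
    (hμt : μt = Real.sqrt (β2 * (β2 - c₃) / (β2 + c₂ - c₃)))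
    (hσt2 : σt2 = β2 * c₂ / (β2 + c₂ - c₃))
    (μ σ2 : ℕ → ℝ)
    (hσ2init : 0 < σ2 1)
    (hrec : ∀ t : ℕ, 1 ≤ t →
      μ (t + 1) = Real.sqrt δ * (μ t / Real.sqrt ((μ t) ^ 2 + σ2 t)) * c₁ ∧
      σ2 (t + 1) = ((μ t) ^ 2 * c₂ + σ2 t * c₃) / ((μ t) ^ 2 + σ2 t)) :
    (0 < μ 1 →
      Tendsto μ atTop (nhds μt) ∧ Tendsto σ2 atTop (nhds σt2)) ∧
    (μ 1 < 0 →
      Tendsto μ atTop (nhds (-μt)) ∧ Tendsto σ2 atTop (nhds σt2)) := by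
  obtain ⟨M, hM⟩ := hZbdd
  have hG2int : Integrable (fun ω => (G ω) ^ 2) P := se_G2_integrable P G hG hGlaw
  have hZ2int : Integrable (fun ω => (Z ω) ^ 2) P := by
    refine Integrable.mono' (integrable_const (M ^ 2)) ((hZ.pow_const 2).aestronglyMeasurable) ?_
    filter_upwards [hM] with ω h
    rw [Real.norm_eq_abs, abs_pow]
    exact pow_le_pow_left₀ (abs_nonneg _) h 2
  have hZG2int : Integrable (fun ω => (Z ω) ^ 2 * (G ω) ^ 2) P := by
    refine Integrable.mono' (hG2int.const_mul (M ^ 2)) (((hZ.pow_const 2).mul (hG.pow_const 2)).aestronglyMeasurable) ?_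
    filter_upwards [hM] with ω h
    rw [Real.norm_eq_abs, abs_mul, abs_pow, abs_pow, sq_abs (G ω)]
    exact mul_le_mul_of_nonneg_right (pow_le_pow_left₀ (abs_nonneg _) h 2) (sq_nonneg _)
  have hZint : Integrable Z P := by
    refine Integrable.mono' (integrable_const M) hZ.aestronglyMeasurable ?_
    filter_upwards [hM] with ω h
    rwa [Real.norm_eq_abs]
  have hZne : ¬ (Z =ᵐ[P] 0) := by
    intro h
    have h1 : (fun ω => Z ω * (G ω) ^ 2) =ᵐ[P] 0 := by
      filter_upwards [h] with ω hω
      simp only [Pi.zero_apply] at hω ⊢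
      rw [hω, zero_mul]
    have hz : c₁ = 0 := by
      rw [hc₁, integral_congr_ae h1, integral_congr_ae h]
      simp
    linarith
  have hc₃pos : 0 < c₃ := by
    have h0 : 0 ≤ c₃ := hc₃ ▸ integral_nonneg fun ω => sq_nonneg _
    rcases h0.lt_or_eq with h | h
    · exact h
    · exfalso
      apply hZne
      have hz : (fun ω => (Z ω) ^ 2) =ᵐ[P] 0 :=
        (integral_eq_zero_iff_of_nonneg (fun ω => sq_nonneg (Z ω)) hZ2int).mp (hc₃ ▸ h.symm)
      filter_upwards [hz] with ω hω
      simpa using pow_eq_zero_iff two_ne_zero |>.mp hω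
  have hGne : ∀ᵐ ω ∂P, G ω ≠ 0 := by
    have h0 : P (G ⁻¹' {0}) = 0 := by
      have hmap : Measure.map G P {0} = 0 := by
        rw [hGlaw]
        exact gaussianReal_absolutelyContinuous 0 one_ne_zero (measure_singleton 0)
      rwa [Measure.map_apply hG (measurableSet_singleton 0)] at hmap
    rw [ae_iff]
    convert h0 using 2
    ext ω
    simp
  have hc₂pos : 0 < c₂ := by
    have h0 : 0 ≤ c₂ := hc₂ ▸ integral_nonneg fun ω => mul_nonneg (sq_nonneg _) (sq_nonneg _)
    rcases h0.lt_or_eq with h | h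
    · exact h
    · exfalso
      apply hZne
      have hz : (fun ω => (Z ω) ^ 2 * (G ω) ^ 2) =ᵐ[P] 0 :=
        (integral_eq_zero_iff_of_nonneg
          (fun ω => mul_nonneg (sq_nonneg (Z ω)) (sq_nonneg (G ω))) hZG2int).mp (hc₂ ▸ h.symm)
      filter_upwards [hz, hGne] with ω hω hGω
      simp only [Pi.zero_apply, mul_eq_zero, pow_eq_zero_iff two_ne_zero] at hω
      simp only [Pi.zero_apply]
      tauto
  constructor
  · intro hμ1
    exact se_aux c₁ c₂ c₃ hc₁pos hc₂pos hc₃pos δ hδpos hδ β2 μt σt2 hβ2 hμt hσt2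
      μ σ2 hσ2init hrec hμ1
  · intro hμ1
    have hrec' : ∀ t : ℕ, 1 ≤ t →
        (fun s => -μ s) (t + 1) = Real.sqrt δ *
          ((fun s => -μ s) t / Real.sqrt (((fun s => -μ s) t) ^ 2 + σ2 t)) * c₁ ∧
        σ2 (t + 1) = (((fun s => -μ s) t) ^ 2 * c₂ + σ2 t * c₃) /
          (((fun s => -μ s) t) ^ 2 + σ2 t) := by
      intro t ht
      obtain ⟨h1, h2⟩ := hrec t ht
      refine ⟨?_, by simpa only [neg_sq] using h2⟩
      simp only [neg_sq]
      rw [h1]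
      ring
    have he := se_aux c₁ c₂ c₃ hc₁pos hc₂pos hc₃pos δ hδpos hδ β2 μt σt2 hβ2 hμt hσt2
      (fun s => -μ s) σ2 hσ2init hrec' (by simpa using hμ1)
    refine ⟨?_, he.2⟩
    have := he.1.neg
    simpa using this
end

section
/- Let (Ω, 𝓕, P) be a probability space, let G : Ω → ℝ have the standard Gaussian law N(0,1), and let Z : Ω → ℝ be measurable and almost surely bounded, with τ = ess sup Z (so Z ≤ τ almost surely). Then on the interval (τ, ∞): (i) the function φ(λ) = λ · E[ Z G² / (λ − Z) ] is non-increasing (antitone); and (ii) for every δ > 0 the function ψ_δ(λ) = λ · ( 1/δ + E[ Z / (λ − Z) ] ) is convex. -/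
open MeasureTheory ProbabilityTheory Real Set

theorem integrable_sq_gaussian : Integrable (fun x : ℝ => x ^ 2) (gaussianReal 0 1) := by
  rw [gaussianReal_of_var_ne_zero _ one_ne_zero, gaussianPDF_def]
  rw [integrable_withDensity_iff ((measurable_gaussianPDFReal 0 1).ennreal_ofReal)
    (ae_of_all _ fun x => ENNReal.ofReal_lt_top)]
  have h : ∀ x : ℝ, (ENNReal.ofReal (gaussianPDFReal 0 1 x)).toReal = gaussianPDFReal 0 1 x :=
    fun x => ENNReal.toReal_ofReal (gaussianPDFReal_nonneg _ _ _)
  simp_rw [h, gaussianPDFReal]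
  have h2 := (integrable_rpow_mul_exp_neg_mul_sq (b := (1:ℝ)/2) (by norm_num)
    (s := 2) (by norm_num)).const_mul ((Real.sqrt (2 * Real.pi))⁻¹)
  apply h2.congr
  refine ae_of_all _ fun x => ?_
  simp only [NNReal.coe_one, mul_one, sub_zero]
  rw [show ((2:ℝ)) = ((2:ℕ):ℝ) by norm_num, Real.rpow_natCast]
  ring_nf

theorem inv_combo_le {x y p q : ℝ} (hx : 0 < x) (hy : 0 < y) (hp : 0 ≤ p) (hq : 0 ≤ q)
    (hpq : p + q = 1) : (p * x + q * y)⁻¹ ≤ p * x⁻¹ + q * y⁻¹ := by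
  have hconv : ConvexOn ℝ (Set.Ioi (0:ℝ)) (fun t : ℝ => t ^ (-1 : ℤ)) :=
    (strictConvexOn_zpow (by decide) (by decide)).convexOn
  have h := hconv.2 (Set.mem_Ioi.2 hx) (Set.mem_Ioi.2 hy) hp hq hpq
  simpa [smul_eq_mul, zpow_neg, zpow_one] using h


/-- On the interval `(τ, ∞)` above the essential supremum `τ` of `Z`, the
function `φ(λ) = λ·E[Z G²/(λ − Z)]` is non-increasing and, for every `δ > 0`,
the function `ψ_δ(λ) = λ·(1/δ + E[Z/(λ − Z)])` is convex. -/
theorem phi_antitone_psi_convex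
    {Ω : Type*} {mΩ : MeasurableSpace Ω} (P : Measure Ω) [IsProbabilityMeasure P]
    (G Z : Ω → ℝ) (hG : Measurable G) (hZ : Measurable Z)
    (hGlaw : Measure.map G P = gaussianReal 0 1)
    (hZbdd : ∃ M : ℝ, ∀ᵐ ω ∂P, |Z ω| ≤ M)
    (τ : ℝ) (hτ : τ = essSup Z P)
    (hZle : ∀ᵐ ω ∂P, Z ω ≤ τ) :
    AntitoneOn (fun l : ℝ => l * ∫ ω, Z ω * (G ω) ^ 2 / (l - Z ω) ∂P)
      (Set.Ioi τ) ∧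
    ∀ δ : ℝ, 0 < δ →
      ConvexOn ℝ (Set.Ioi τ)
        (fun l : ℝ => l * (1 / δ + ∫ ω, Z ω / (l - Z ω) ∂P)) := by
  obtain ⟨M₀, hM₀⟩ := hZbdd
  set M : ℝ := max M₀ 0 with hMdef
  have hM : ∀ᵐ ω ∂P, |Z ω| ≤ M := hM₀.mono fun ω h => h.trans (le_max_left _ _)
  have hMnn : 0 ≤ M := le_max_right _ _
  -- G² is integrable
  have hGsq : Integrable (fun ω => G ω ^ 2) P := by
    have : Integrable (fun x : ℝ => x ^ 2) (Measure.map G P) := by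
      rw [hGlaw]; exact integrable_sq_gaussian
    exact (integrable_map_measure (by fun_prop) hG.aemeasurable).mp this
  -- integrability of the integrands
  have hIntG : ∀ l : ℝ, τ < l → Integrable (fun ω => Z ω * G ω ^ 2 / (l - Z ω)) P := by
    intro l hl
    have hlτ : 0 < l - τ := by linarith
    refine Integrable.mono' (hGsq.const_mul (M / (l - τ))) ?_ ?_
    · exact ((hZ.mul (hG.pow_const 2)).div (measurable_const.sub hZ)).aestronglyMeasurable
    · filter_upwards [hM, hZle] with ω h1 h2
      have hpos : 0 < l - Z ω := by linarith [abs_le.1 h1]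
      rw [Real.norm_eq_abs, abs_div, abs_mul, abs_of_pos hpos, abs_of_nonneg (sq_nonneg (G ω)),
        div_mul_eq_mul_div]
      gcongr <;> first | exact h1 | positivity | linarith
  have hIntZ : ∀ l : ℝ, τ < l → Integrable (fun ω => Z ω / (l - Z ω)) P := by
    intro l hl
    have hlτ : 0 < l - τ := by linarith
    refine Integrable.mono' (integrable_const (M / (l - τ))) ?_ ?_
    · exact (hZ.div (measurable_const.sub hZ)).aestronglyMeasurable
    · filter_upwards [hM, hZle] with ω h1 h2
      have hpos : 0 < l - Z ω := by linarith [abs_le.1 h1]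
      rw [Real.norm_eq_abs, abs_div, abs_of_pos hpos]
      gcongr <;> first | exact h1 | positivity | linarith
  constructor
  · -- antitone
    intro a ha b hb hab
    simp only [Set.mem_Ioi] at ha hb
    simp only
    rw [← integral_const_mul, ← integral_const_mul]
    refine integral_mono_ae ((hIntG b hb).const_mul b) ((hIntG a ha).const_mul a) ?_
    filter_upwards [hZle] with ω hω
    have hpa : 0 < a - Z ω := by linarith
    have hpb : 0 < b - Z ω := by linarith
    have key : ∀ l : ℝ, Z ω < l →
        l * (Z ω * G ω ^ 2 / (l - Z ω)) = Z ω * G ω ^ 2 + Z ω ^ 2 * G ω ^ 2 / (l - Z ω) := by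
      intro l hl
      have : l - Z ω ≠ 0 := by linarith
      field_simp
      ring
    rw [key a (by linarith), key b (by linarith)]
    have : Z ω ^ 2 * G ω ^ 2 / (b - Z ω) ≤ Z ω ^ 2 * G ω ^ 2 / (a - Z ω) := by
      gcongr <;> first | positivity | linarith
    linarith
  · -- convex
    intro δ hδ
    refine ⟨convex_Ioi τ, ?_⟩
    intro a ha b hb p q hp hq hpq
    have hc : p • a + q • b ∈ Set.Ioi τ := (convex_Ioi τ) ha hb hp hq hpq
    simp only [smul_eq_mul, Set.mem_Ioi] at ha hb hc ⊢
    set c : ℝ := p * a + q * b with hcdef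
    have hkey : c * ∫ ω, Z ω / (c - Z ω) ∂P ≤
        p * (a * ∫ ω, Z ω / (a - Z ω) ∂P) + q * (b * ∫ ω, Z ω / (b - Z ω) ∂P) := by
      rw [← integral_const_mul, ← integral_const_mul, ← integral_const_mul,
        ← integral_const_mul, ← integral_const_mul,
        ← integral_add (((hIntZ a ha).const_mul a).const_mul p)
          (((hIntZ b hb).const_mul b).const_mul q)]
      refine integral_mono_ae ((hIntZ c hc).const_mul c) ?_ ?_
      · exact (((hIntZ a ha).const_mul a).const_mul p).add
          (((hIntZ b hb).const_mul b).const_mul q)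
      filter_upwards [hZle] with ω hω
      set z := Z ω with hzdef
      have hza : 0 < a - z := by linarith
      have hzb : 0 < b - z := by linarith
      have hzc : 0 < c - z := by linarith
      have key : ∀ l : ℝ, z < l → l * (z / (l - z)) = z + z ^ 2 * (l - z)⁻¹ := by
        intro l hl
        have : l - z ≠ 0 := by linarith
        field_simp
        ring
      rw [key a (by linarith), key b (by linarith), key c (by linarith)]
      have hcz : c - z = p * (a - z) + q * (b - z) := by
        rw [hcdef]; linear_combination z * hpq
      have hinv : (c - z)⁻¹ ≤ p * (a - z)⁻¹ + q * (b - z)⁻¹ := by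
        rw [hcz]; exact inv_combo_le hza hzb hp hq hpq
      nlinarith [mul_le_mul_of_nonneg_left hinv (sq_nonneg z), hpq]
    have hcdiv : c / δ = p * (a / δ) + q * (b / δ) := by
      rw [hcdef]; ring
    have expand : ∀ l : ℝ, l * (1 / δ + ∫ ω, Z ω / (l - Z ω) ∂P)
        = l / δ + l * ∫ ω, Z ω / (l - Z ω) ∂P := by
      intro l; ring
    rw [expand, expand, expand]
    nlinarith [hkey, hcdiv]
end

section
/- Let n, d ≥ 1, let A be a real n × d matrix, let D be a real diagonal n × n matrix, let m ∈ ℝ and c ∈ ℝ with c ≠ 0, let δ > 0, and set β = √δ · c. Suppose the matrix D + δc·I_n is invertible, and suppose u ∈ ℝⁿ and v ∈ ℝ^d satisfy the fixed-point equations u = (1/(√δ β)) (A v − D u) and v = Aᵀ D u − (√δ/β) m v. Then u = (D + δc·I_n)^{−1} A v and (1 + m/c) · v = Aᵀ D (D + δc·I_n)^{−1} A v; in particular, if v ≠ 0, then v is an eigenvector of the matrix Aᵀ D (D + δc·I_n)^{−1} A with eigenvalue 1 + m/c. -/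
open Matrix

/-- Fixed points of the GAMP iteration with linear denoisers are eigenvectors
of the spectral matrix: if `u`, `v` satisfy the fixed-point equations
`u = (1/(√δ β))(A v − D u)` and `v = Aᵀ D u − (√δ/β) m v` with `β = √δ · c`,
then `u = (D + δc·I)⁻¹ A v` and `(1 + m/c)·v = Aᵀ D (D + δc·I)⁻¹ A v`; in
particular, if `v ≠ 0`, then `v` is an eigenvector of
`Aᵀ D (D + δc·I)⁻¹ A` with eigenvalue `1 + m/c`. -/
theorem gamp_fixed_point_eigenvector (n d : ℕ) (hn : 1 ≤ n) (hd : 1 ≤ d)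
    (A : Matrix (Fin n) (Fin d) ℝ)
    (D : Matrix (Fin n) (Fin n) ℝ) (hD : D.IsDiag)
    (m c δ : ℝ) (hc : c ≠ 0) (hδ : 0 < δ)
    (β : ℝ) (hβ : β = Real.sqrt δ * c)
    (hInv : IsUnit (D + (δ * c) • (1 : Matrix (Fin n) (Fin n) ℝ)))
    (u : Fin n → ℝ) (v : Fin d → ℝ)
    (hu : u = (1 / (Real.sqrt δ * β)) • (A.mulVec v - D.mulVec u))
    (hv : v = Aᵀ.mulVec (D.mulVec u) - (Real.sqrt δ / β * m) • v) :
    u = (D + (δ * c) • (1 : Matrix (Fin n) (Fin n) ℝ))⁻¹.mulVec (A.mulVec v) ∧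
    (1 + m / c) • v
      = (Aᵀ * D * (D + (δ * c) • (1 : Matrix (Fin n) (Fin n) ℝ))⁻¹ * A).mulVec v ∧
    (v ≠ 0 →
      Module.End.HasEigenvector
        (Matrix.toLin' (Aᵀ * D * (D + (δ * c) • (1 : Matrix (Fin n) (Fin n) ℝ))⁻¹ * A))
        (1 + m / c) v) := by
  have hs : Real.sqrt δ ≠ 0 := by positivity
  have hsb : Real.sqrt δ * β = δ * c := by
    rw [hβ, ← mul_assoc, Real.mul_self_sqrt hδ.le]
  have hsbne : Real.sqrt δ * β ≠ 0 := by
    rw [hsb]; exact mul_ne_zero hδ.ne' hc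
  set M : Matrix (Fin n) (Fin n) ℝ := D + (δ * c) • (1 : Matrix (Fin n) (Fin n) ℝ) with hM
  have hdet : IsUnit M.det := (Matrix.isUnit_iff_isUnit_det M).mp hInv
  -- (D + δc) u = A v
  have h1 : M.mulVec u = A.mulVec v := by
    have key : (Real.sqrt δ * β) • u = A.mulVec v - D.mulVec u := by
      conv_lhs => rw [hu]
      rw [smul_smul, mul_one_div, div_self hsbne, one_smul]
    have h2 : D.mulVec u + (δ * c) • u = A.mulVec v := by
      rw [← hsb, add_comm]
      exact eq_sub_iff_add_eq.mp key
    rw [hM, add_mulVec, smul_mulVec, one_mulVec]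
    exact h2
  have hu' : u = M⁻¹.mulVec (A.mulVec v) := by
    rw [← h1, mulVec_mulVec, Matrix.nonsing_inv_mul M hdet, one_mulVec]
  refine ⟨hu', ?_, ?_⟩
  · have hdb : Real.sqrt δ / β * m = m / c := by
      rw [hβ, div_mul_eq_div_div, div_self hs, one_div, inv_mul_eq_div]
    have : (1 + m / c) • v = Aᵀ.mulVec (D.mulVec u) := by
      rw [add_smul, one_smul]
      nth_rewrite 1 [hv]
      rw [hdb]; abel
    rw [this, hu', mulVec_mulVec, mulVec_mulVec, mulVec_mulVec,
      Matrix.mul_assoc, Matrix.mul_assoc]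
  · intro hvne
    have hdb : Real.sqrt δ / β * m = m / c := by
      rw [hβ, div_mul_eq_div_div, div_self hs, one_div, inv_mul_eq_div]
    have heq : (1 + m / c) • v = Aᵀ.mulVec (D.mulVec u) := by
      rw [add_smul, one_smul]
      nth_rewrite 1 [hv]
      rw [hdb]; abel
    refine ⟨?_, hvne⟩
    rw [Module.End.mem_eigenspace_iff, Matrix.toLin'_apply]
    rw [heq, hu', mulVec_mulVec, mulVec_mulVec, mulVec_mulVec,
      Matrix.mul_assoc, Matrix.mul_assoc]
end
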